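/- Let p be a prime, a₁, a₂ integers coprime to p, and 0 ≤ k₁ ≤ k₂ ≤ k₃ integers. If p is odd, then the Γ₀(p^{k₃})-invariants of ℂL_{p^{k₁}}(a₁) ⊗ ℂL_{p^{k₂}}(a₂) coincide with the Γ₀(p^{k₂})-invariants: any vector invariant under Γ₀(p^{k₂}) is automatically invariant under all of Γ₀(p^{k₃}) acting on this space. -/

import Mathlib

open Complex Matrix MatrixGroups CongruenceSubgroup ModularGroup

noncomputable section

/-- `e(x) = exp(2πix)`. -/
def eC (x : ℂ) : ℂ := Complex.exp (2 * Real.pi * Complex.I * x)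

/-- The basis vector `e^{γ₁} ⊗ e^{γ₂}`. -/
def bas {α : Type*} [DecidableEq α] (γ : α) : α → ℂ := fun x => if x = γ then 1 else 0

/-- The subspace of `Γ`-invariant vectors of a representation `ρ`. -/
def invariants {V : Type*} [AddCommGroup V] [Module ℂ V]
    (ρ : SL(2, ℤ) →* (V ≃ₗ[ℂ] V)) (Γ : Subgroup SL(2, ℤ)) : Submodule ℂ V where
  carrier := {v | ∀ g ∈ Γ, ρ g v = v}
  add_mem' := by
    intro x y hx hy g hg
    simp [map_add, hx g hg, hy g hg]
  zero_mem' := by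
    intro g hg
    simp
  smul_mem' := by
    intro c x hx g hg
    simp [_root_.map_smul, hx g hg]

/-- The value `e(sign(L_{pⁿ}(a))/8)` given by Milgram's formula (for odd `p`). -/
def sgOdd (p : ℕ) [Fact p.Prime] (n : ℕ) (a : ℤ) : ℂ :=
  if Odd n then
    (if p % 4 = 3 then (legendreSym p a : ℂ) * Complex.I else (legendreSym p a : ℂ))
  else 1

/- ### Auxiliary lemmas -/

private lemma sl2_det' (g : SL(2,ℤ)) : g 0 0 * g 1 1 - g 0 1 * g 1 0 = 1 := by
  have := g.2; rw [Matrix.det_fin_two] at this; exact this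

private lemma w_coe (m : ℤ) :
    ((ModularGroup.S⁻¹ * ModularGroup.T ^ m * ModularGroup.S : SL(2,ℤ))).1 = !![1, 0; -m, 1] := by
  simp [Matrix.SpecialLinearGroup.coe_mul, ModularGroup.coe_S, ModularGroup.coe_T_zpow,
    Matrix.SpecialLinearGroup.coe_inv, Matrix.adjugate_fin_two, Matrix.mul_fin_two]

private lemma w_inv (m : ℤ) :
    (ModularGroup.S⁻¹ * ModularGroup.T ^ m * ModularGroup.S : SL(2,ℤ))⁻¹
      = ModularGroup.S⁻¹ * ModularGroup.T ^ (-m) * ModularGroup.S := by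
  rw [_root_.zpow_neg]; group

private lemma mul_w_entry (g : SL(2,ℤ)) (m : ℤ) :
    ((g * (ModularGroup.S⁻¹ * ModularGroup.T ^ (-m) * ModularGroup.S)) : SL(2,ℤ)) 1 0
      = g 1 0 + g 1 1 * m := by
  have h : ((ModularGroup.S⁻¹ * ModularGroup.T ^ (-m) * ModularGroup.S : SL(2,ℤ))).1
      = !![1, 0; m, 1] := by
    rw [w_coe]; norm_num
  have h2 : ((g * (ModularGroup.S⁻¹ * ModularGroup.T ^ (-m) * ModularGroup.S)) : SL(2,ℤ)).1
      = g.1 * !![1, 0; m, 1] := by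
    rw [Matrix.SpecialLinearGroup.coe_mul, h]
  show ((g * (ModularGroup.S⁻¹ * ModularGroup.T ^ (-m) * ModularGroup.S)) : SL(2,ℤ)).1 1 0 = _
  rw [h2, Matrix.mul_apply, Fin.sum_univ_two]
  show g.1 1 0 * 1 + g.1 1 1 * m = _
  ring

private lemma S_rel : ModularGroup.S = ModularGroup.T⁻¹ *
    (ModularGroup.S⁻¹ * ModularGroup.T ^ (-1 : ℤ) * ModularGroup.S) * ModularGroup.T⁻¹ := by
  apply Subtype.ext
  rw [Matrix.SpecialLinearGroup.coe_mul, Matrix.SpecialLinearGroup.coe_mul, w_coe,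
    ModularGroup.coe_T_inv, ModularGroup.coe_S, Matrix.mul_fin_two, Matrix.mul_fin_two]
  norm_num

private lemma closure_ST :
    Subgroup.closure ({ModularGroup.S, ModularGroup.T} : Set SL(2,ℤ)) = ⊤ := by
  set H := Subgroup.closure ({ModularGroup.S, ModularGroup.T} : Set SL(2,ℤ)) with hH
  rw [eq_top_iff]
  have hS : ModularGroup.S ∈ H := Subgroup.subset_closure (by simp)
  have hT : ModularGroup.T ∈ H := Subgroup.subset_closure (by simp)
  have key : ∀ n : ℕ, ∀ g : SL(2,ℤ), (g 1 0).natAbs = n → g ∈ H := by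
    intro n
    induction n using Nat.strong_induction_on with
    | _ n ih =>
      intro g hg
      by_cases hc : g 1 0 = 0
      · have hdet := sl2_det' g
        rw [hc, mul_zero, sub_zero] at hdet
        rcases Int.mul_eq_one_iff_eq_one_or_neg_one.mp hdet with ⟨h1, h2⟩ | ⟨h1, h2⟩
        · have : g = ModularGroup.T ^ (g 0 1) := by
            apply Subtype.ext
            rw [ModularGroup.coe_T_zpow]
            ext i j
            fin_cases i <;> fin_cases j <;> simp [h1, h2, hc]
          rw [this]; exact Subgroup.zpow_mem _ hT _
        · have : g = ModularGroup.S * ModularGroup.S * ModularGroup.T ^ (-(g 0 1)) := by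
            apply Subtype.ext
            rw [Matrix.SpecialLinearGroup.coe_mul, Matrix.SpecialLinearGroup.coe_mul,
              ModularGroup.coe_S, ModularGroup.coe_T_zpow, Matrix.mul_fin_two, Matrix.mul_fin_two]
            ext i j
            fin_cases i <;> fin_cases j <;> simp [h1, h2, hc]
          rw [this]
          exact Subgroup.mul_mem _ (Subgroup.mul_mem _ hS hS) (Subgroup.zpow_mem _ hT _)
      · set c := g 1 0 with hc'
        set q := g 0 0 / c with hq
        set g' := ModularGroup.S * ModularGroup.T ^ (-q) * g with hg'
        have hG : g' 1 0 = g 0 0 % c := by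
          have h1 : ((ModularGroup.S * ModularGroup.T ^ (-q) : SL(2,ℤ))).1 = !![0, -1; 1, -q] := by
            simp [Matrix.SpecialLinearGroup.coe_mul, ModularGroup.coe_S, ModularGroup.coe_T_zpow,
              Matrix.mul_fin_two]
          have h2 : (g' : Matrix (Fin 2) (Fin 2) ℤ) = !![0, -1; 1, -q] * g.1 := by
            rw [hg', Matrix.SpecialLinearGroup.coe_mul, Matrix.SpecialLinearGroup.coe_mul]
            rw [← Matrix.SpecialLinearGroup.coe_mul, h1]
          show (g' : Matrix (Fin 2) (Fin 2) ℤ) 1 0 = _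
          rw [h2, Matrix.mul_apply, Fin.sum_univ_two]
          show 1 * g.1 0 0 + (-q) * g.1 1 0 = _
          rw [Int.emod_def]; ring
        have hlt : (g' 1 0).natAbs < n := by
          rw [hG, ← hg]
          have h0 : 0 ≤ g 0 0 % c := Int.emod_nonneg _ hc
          have h1 : g 0 0 % c < |c| := by
            have := Int.emod_lt (g 0 0) hc; rwa [Int.natCast_natAbs] at this
          have := Int.natAbs_lt_natAbs_of_nonneg_of_lt h0 h1
          rwa [Int.natAbs_abs] at this
        have hg'H : g' ∈ H := ih _ hlt g' rfl
        have : g = ModularGroup.T ^ q * ModularGroup.S⁻¹ * g' := by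
          rw [hg']; group
        rw [this]
        exact Subgroup.mul_mem _
          (Subgroup.mul_mem _ (Subgroup.zpow_mem _ hT q) (Subgroup.inv_mem _ hS)) hg'H
  intro g _
  exact key _ g rfl

/-- for an odd prime `p`, integers `a₁, a₂` coprime to `p` and
`0 ≤ k₁ ≤ k₂ ≤ k₃`, the `Γ₀(p^{k₃})`-invariants of the tensor product Weil representation
`ℂ L_{p^{k₁}}(a₁) ⊗ ℂ L_{p^{k₂}}(a₂)` coincide with the `Γ₀(p^{k₂})`-invariants. -/
theorem stmt10 (p : ℕ) [hp : Fact p.Prime] (hp2 : Odd p) (a₁ a₂ : ℤ)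
    (ha₁ : IsCoprime a₁ (p : ℤ)) (ha₂ : IsCoprime a₂ (p : ℤ))
    (k₁ k₂ k₃ : ℕ) (h₁₂ : k₁ ≤ k₂) (h₂₃ : k₂ ≤ k₃)
    (ρ : SL(2, ℤ) →*
      ((ZMod (p ^ k₁) × ZMod (p ^ k₂) → ℂ) ≃ₗ[ℂ] (ZMod (p ^ k₁) × ZMod (p ^ k₂) → ℂ)))
    (hT : ∀ γ : ZMod (p ^ k₁) × ZMod (p ^ k₂), ρ ModularGroup.T (bas γ) =
      eC ((a₁ : ℂ) * (γ.1.val : ℂ) ^ 2 / (p : ℂ) ^ k₁ +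
          (a₂ : ℂ) * (γ.2.val : ℂ) ^ 2 / (p : ℂ) ^ k₂) • bas γ)
    (hS : ∀ γ : ZMod (p ^ k₁) × ZMod (p ^ k₂), ρ ModularGroup.S (bas γ) =
      ((sgOdd p k₁ a₁ * sgOdd p k₂ a₂)⁻¹ / Real.sqrt ((p : ℝ) ^ (k₁ + k₂))) •
        ∑ β : ZMod (p ^ k₁) × ZMod (p ^ k₂),
          eC (-(2 * (a₁ : ℂ) * (γ.1.val : ℂ) * (β.1.val : ℂ)) / (p : ℂ) ^ k₁ -
              2 * (a₂ : ℂ) * (γ.2.val : ℂ) * (β.2.val : ℂ) / (p : ℂ) ^ k₂) • bas β) :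
    invariants ρ (Gamma0 (p ^ k₃)) = invariants ρ (Gamma0 (p ^ k₂)) := by
  classical
  have hp0 : (p : ℂ) ≠ 0 := Nat.cast_ne_zero.mpr hp.out.ne_zero
  set E : ZMod (p ^ k₁) × ZMod (p ^ k₂) → ℂ := fun γ =>
    (a₁ : ℂ) * (γ.1.val : ℂ) ^ 2 / (p : ℂ) ^ k₁ +
      (a₂ : ℂ) * (γ.2.val : ℂ) ^ 2 / (p : ℂ) ^ k₂ with hE
  have hT' : ∀ γ, ρ ModularGroup.T (bas γ) = eC (E γ) • bas γ := by
    intro γ; simp only [hE]; exact hT γ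
  -- Step A: powers of T on basis vectors
  have hTpow : ∀ (n : ℕ) (γ), ρ (ModularGroup.T ^ n) (bas γ) = eC (E γ) ^ n • bas γ := by
    intro n γ
    induction n with
    | zero => simp
    | succ n ihn =>
      rw [pow_succ, _root_.map_mul]
      show ρ (ModularGroup.T ^ n) (ρ ModularGroup.T (bas γ)) = _
      rw [hT' γ, _root_.map_smul, ihn, smul_smul, pow_succ]
      ring_nf
  -- Step B : the root of unity
  have hEC1 : ∀ γ, eC (E γ) ^ (p ^ k₂) = 1 := by
    intro γ
    have hpp : (p : ℂ) ^ k₁ * (p : ℂ) ^ (k₂ - k₁) = (p : ℂ) ^ k₂ := pow_mul_pow_sub _ h₁₂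
    have hkey : ((p : ℂ) ^ k₂) * E γ =
        ((a₁ * (γ.1.val : ℤ) ^ 2 * (p : ℤ) ^ (k₂ - k₁) + a₂ * (γ.2.val : ℤ) ^ 2 : ℤ) : ℂ) := by
      simp only [hE]
      push_cast
      rw [← hpp]
      field_simp
    calc eC (E γ) ^ (p ^ k₂) = eC (((p ^ k₂ : ℕ) : ℂ) * E γ) := by
          rw [eC, eC, ← Complex.exp_nat_mul]
          ring_nf
      _ = 1 := by
          have : ((p ^ k₂ : ℕ) : ℂ) = (p : ℂ) ^ k₂ := by push_cast; ring
          rw [this, hkey, eC,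
            show 2 * (Real.pi : ℂ) * Complex.I *
                ((a₁ * (γ.1.val : ℤ) ^ 2 * (p : ℤ) ^ (k₂ - k₁) + a₂ * (γ.2.val : ℤ) ^ 2 : ℤ) : ℂ)
              = ((a₁ * (γ.1.val : ℤ) ^ 2 * (p : ℤ) ^ (k₂ - k₁) + a₂ * (γ.2.val : ℤ) ^ 2 : ℤ) : ℂ)
                  * (2 * (Real.pi : ℂ) * Complex.I) by ring]
          exact Complex.exp_int_mul_two_pi_mul_I _
  -- Step C : ρ (T ^ (p ^ k₂)) = 1
  have hbas : ∀ γ : ZMod (p ^ k₁) × ZMod (p ^ k₂),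
      bas γ = Pi.basisFun ℂ (ZMod (p ^ k₁) × ZMod (p ^ k₂)) γ := by
    intro γ; funext x; simp [bas, Pi.basisFun_apply, Pi.single_apply]
  have hone : ρ (ModularGroup.T ^ (p ^ k₂)) = 1 := by
    apply LinearEquiv.toLinearMap_injective
    apply Module.Basis.ext (Pi.basisFun ℂ (ZMod (p ^ k₁) × ZMod (p ^ k₂)))
    intro γ
    show ρ (ModularGroup.T ^ (p ^ k₂)) (Pi.basisFun ℂ _ γ)
      = (1 : _ ≃ₗ[ℂ] _).toLinearMap (Pi.basisFun ℂ _ γ)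
    rw [← hbas γ, hTpow, hEC1, one_smul]
    rfl
  -- Step D : T ^ m acts trivially whenever p ^ k₂ ∣ m
  have hzero : ∀ m : ℤ, ((p : ℤ) ^ k₂) ∣ m → ρ (ModularGroup.T ^ m) = 1 := by
    rintro m ⟨q, rfl⟩
    have hcast : ((p : ℤ) ^ k₂) = ((p ^ k₂ : ℕ) : ℤ) := by push_cast; ring
    rw [hcast, _root_.zpow_mul, zpow_natCast, map_zpow, hone, _root_.one_zpow]
  -- Step E : conjugates by S
  have hw1 : ∀ m : ℤ, ((p : ℤ) ^ k₂) ∣ m →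
      ρ (ModularGroup.S⁻¹ * ModularGroup.T ^ m * ModularGroup.S) = 1 := by
    intro m hm
    rw [_root_.map_mul, _root_.map_mul, map_inv, hzero m hm, mul_one]
    simp
  -- Main equivalence
  have main : ∀ v : ZMod (p ^ k₁) × ZMod (p ^ k₂) → ℂ,
      (∀ g ∈ Gamma0 (p ^ k₃), ρ g v = v) ↔ (∀ g ∈ Gamma0 (p ^ k₂), ρ g v = v) := by
    intro v
    constructor
    · intro hv g hg
      have hc : ((p : ℤ)) ^ k₂ ∣ g 1 0 := by
        have h := Gamma0_mem.mp hg
        have h2 := (ZMod.intCast_zmod_eq_zero_iff_dvd (g 1 0) (p ^ k₂)).mp h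
        exact_mod_cast h2
      rcases Nat.eq_zero_or_pos k₂ with hk | hk
      · -- the representation is trivial
        have hall : ∀ m : ℤ, ((p : ℤ) ^ k₂) ∣ m := by
          rw [hk, pow_zero]; exact fun m => one_dvd m
        have hT1 : ρ ModularGroup.T = 1 := by
          have := hzero 1 (hall 1); rwa [zpow_one] at this
        have hL1 : ρ (ModularGroup.S⁻¹ * ModularGroup.T ^ (-1 : ℤ) * ModularGroup.S) = 1 :=
          hw1 _ (hall _)
        have hS1 : ρ ModularGroup.S = 1 := by
          rw [S_rel, _root_.map_mul, _root_.map_mul, hL1, map_inv, hT1]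
          simp
        have hker : (⊤ : Subgroup SL(2,ℤ)) ≤ ρ.ker := by
          rw [← closure_ST]
          apply Subgroup.closure_le _ |>.mpr
          intro x hx
          rcases hx with rfl | rfl
          · exact hS1
          · exact hT1
        have : ρ g = 1 := hker (Subgroup.mem_top g)
        rw [this]; rfl
      · -- the interesting case
        have hdet := sl2_det' g
        have h1 : IsCoprime (g 1 1) (g 1 0) := ⟨g 0 0, -(g 0 1), by linarith⟩
        have h2 : IsCoprime (g 1 1) ((p : ℤ)) :=
          (h1.of_isCoprime_of_dvd_right hc).of_isCoprime_of_dvd_right (dvd_pow_self _ hk.ne')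
        have h3 : IsCoprime (g 1 1) ((p : ℤ) ^ (k₃ - k₂)) := h2.pow_right
        obtain ⟨x, y, hxy⟩ := h3
        obtain ⟨c', hcc⟩ := hc
        set m : ℤ := (p : ℤ) ^ k₂ * (-(c' * x)) with hm
        have hdvdm : ((p : ℤ) ^ k₂) ∣ m := Dvd.intro _ rfl
        have hd3 : ((p : ℤ)) ^ k₃ ∣ (g 1 0 + g 1 1 * m) := by
          refine ⟨c' * y, ?_⟩
          have hpp : ((p : ℤ)) ^ k₂ * (p : ℤ) ^ (k₃ - k₂) = (p : ℤ) ^ k₃ :=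
            pow_mul_pow_sub _ h₂₃
          rw [hcc, hm, ← hpp]
          linear_combination (-((p : ℤ) ^ k₂ * c')) * hxy
        set w := ModularGroup.S⁻¹ * ModularGroup.T ^ m * ModularGroup.S with hwd
        have hginv : g * w⁻¹ ∈ Gamma0 (p ^ k₃) := by
          rw [Gamma0_mem]
          have hwi : w⁻¹ = ModularGroup.S⁻¹ * ModularGroup.T ^ (-m) * ModularGroup.S := w_inv m
          have he : (g * w⁻¹) 1 0 = g 1 0 + g 1 1 * m := by
            rw [hwi]; exact mul_w_entry g m
          rw [he, ZMod.intCast_zmod_eq_zero_iff_dvd]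
          exact_mod_cast hd3
        have hsplit : ρ g v = ρ (g * w⁻¹) (ρ w v) := by
          have : ρ (g * w⁻¹) (ρ w v) = (ρ (g * w⁻¹) * ρ w) v := rfl
          rw [this, ← _root_.map_mul, inv_mul_cancel_right]
        rw [hsplit, hw1 m hdvdm]
        exact hv _ hginv
    · intro hv g hg
      apply hv
      rw [Gamma0_mem] at hg ⊢
      have h3 := (ZMod.intCast_zmod_eq_zero_iff_dvd _ _).mp hg
      rw [ZMod.intCast_zmod_eq_zero_iff_dvd]
      exact dvd_trans (by exact_mod_cast pow_dvd_pow (p : ℤ) h₂₃) h3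
  ext v
  exact main v
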